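/- With the weights of the Match_Π reduction, any two matchings M, M' that each have maximum cardinality on every V_i, contain no edges within a side of the bipartition, and satisfy |M| > |M'| have weight difference at least 1 − 1/|E| − 1/|E|^{n+2} > 0; hence a maximum weight matching among such matchings also has maximum cardinality among them. -/

import Mathlib

open Finset
open scoped Classical symmDiff

/-- `M` is a matching of the simple graph `G`: a finite set of edges of `G`
that are pairwise vertex-disjoint. -/
def IsMatching {V : Type*} (G : SimpleGraph V) (M : Finset (Sym2 V)) : Prop :=
  ↑M ⊆ G.edgeSet ∧ ∀ v : V, ∀ e ∈ M, ∀ f ∈ M, v ∈ e → v ∈ f → e = f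

/-- `v` is covered (matched) by the edge set `M`. -/
def Covers {V : Type*} (M : Finset (Sym2 V)) (v : V) : Prop :=
  ∃ e ∈ M, v ∈ e

/-- Internal edges of `M` w.r.t. the partition given by `part`. -/
noncomputable def internalEdges {V : Type*} {n : ℕ} (part : V → Fin n)
    (M : Finset (Sym2 V)) : Finset (Sym2 V) :=
  M.filter (fun e => ∀ u ∈ e, ∀ v ∈ e, part u = part v)

/-- With the Match_Π weights (internal edges weigh `|E| + 3`, cross-bipartition edges
weigh between `1` and `1 + 1/|E|² + 1/|E|^(n+3)`), two matchings `M, M'` with the same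
(maximum) number of internal edges, no within-side external edges, and `|M| > |M'|`
have weight difference at least `1 − 1/|E| − 1/|E|^(n+2) > 0`; hence a maximum weight
matching among such matchings also has maximum cardinality among them. -/
theorem stmt_15 {V : Type*} [DecidableEq V] {n : ℕ} (hn : 1 ≤ n) (G : SimpleGraph V)
    (part : V → Fin n) (B : Fin n → Bool)
    (E : Finset (Sym2 V)) (hE : ↑E = G.edgeSet) (hEcard : 1 < E.card)
    (w : Sym2 V → ℚ)
    (hint : ∀ e ∈ E, (∀ u ∈ e, ∀ v ∈ e, part u = part v) → w e = (E.card : ℚ) + 3)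
    (hcross : ∀ e ∈ E, ∀ u ∈ e, ∀ v ∈ e, part u ≠ part v → B (part u) ≠ B (part v) →
      1 ≤ w e ∧ w e ≤ 1 + 1 / (E.card : ℚ) ^ 2 + 1 / (E.card : ℚ) ^ (n + 3))
    (M M' : Finset (Sym2 V)) (hM : IsMatching G M) (hM' : IsMatching G M')
    (hME : M ⊆ E) (hM'E : M' ⊆ E)
    (hMside : ∀ e ∈ M, ∀ u ∈ e, ∀ v ∈ e, part u ≠ part v → B (part u) ≠ B (part v))
    (hM'side : ∀ e ∈ M', ∀ u ∈ e, ∀ v ∈ e, part u ≠ part v → B (part u) ≠ B (part v))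
    (hintcard : (internalEdges part M).card = (internalEdges part M').card)
    (hcard : M'.card < M.card) :
    (∑ e ∈ M, w e) - (∑ e ∈ M', w e) ≥
      1 - 1 / (E.card : ℚ) - 1 / (E.card : ℚ) ^ (n + 2) ∧
    (0 : ℚ) < 1 - 1 / (E.card : ℚ) - 1 / (E.card : ℚ) ^ (n + 2) := by
  classical
  set P : Sym2 V → Prop := fun e => ∀ u ∈ e, ∀ v ∈ e, part u = part v with hP
  have hm2 : (2:ℚ) ≤ (E.card : ℚ) := by exact_mod_cast hEcard
  have hm0 : (0:ℚ) < (E.card : ℚ) := by linarith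
  have hmne : (E.card : ℚ) ≠ 0 := ne_of_gt hm0
  -- identify internalEdges with filter
  have hieM : internalEdges part M = M.filter P := by
    simp [internalEdges, hP]
  have hieM' : internalEdges part M' = M'.filter P := by
    simp [internalEdges, hP]
  -- cross bounds
  have hcrossM : ∀ e ∈ M.filter (fun e => ¬ P e),
      1 ≤ w e ∧ w e ≤ 1 + 1/(E.card:ℚ)^2 + 1/(E.card:ℚ)^(n+3) := by
    intro e he
    rw [Finset.mem_filter] at he
    obtain ⟨heM, hnP⟩ := he
    simp only [hP] at hnP
    push_neg at hnP
    obtain ⟨u, hu, v, hv, huv⟩ := hnP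
    exact hcross e (hME heM) u hu v hv huv (hMside e heM u hu v hv huv)
  have hcrossM' : ∀ e ∈ M'.filter (fun e => ¬ P e),
      1 ≤ w e ∧ w e ≤ 1 + 1/(E.card:ℚ)^2 + 1/(E.card:ℚ)^(n+3) := by
    intro e he
    rw [Finset.mem_filter] at he
    obtain ⟨heM, hnP⟩ := he
    simp only [hP] at hnP
    push_neg at hnP
    obtain ⟨u, hu, v, hv, huv⟩ := hnP
    exact hcross e (hM'E heM) u hu v hv huv (hM'side e heM u hu v hv huv)
  -- internal sums
  have hIM : ∑ e ∈ M.filter P, w e = ((M.filter P).card : ℚ) * ((E.card:ℚ) + 3) := by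
    rw [Finset.sum_congr rfl (fun e he => ?_), Finset.sum_const, nsmul_eq_mul]
    rw [Finset.mem_filter] at he
    exact hint e (hME he.1) he.2
  have hIM' : ∑ e ∈ M'.filter P, w e = ((M'.filter P).card : ℚ) * ((E.card:ℚ) + 3) := by
    rw [Finset.sum_congr rfl (fun e he => ?_), Finset.sum_const, nsmul_eq_mul]
    rw [Finset.mem_filter] at he
    exact hint e (hM'E he.1) he.2
  have hic : (M.filter P).card = (M'.filter P).card := by
    rw [← hieM, ← hieM']; exact hintcard
  -- sum splits
  have hsplit : ∑ e ∈ M, w e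
      = ∑ e ∈ M.filter P, w e + ∑ e ∈ M.filter (fun e => ¬ P e), w e :=
    (Finset.sum_filter_add_sum_filter_not M P w).symm
  have hsplit' : ∑ e ∈ M', w e
      = ∑ e ∈ M'.filter P, w e + ∑ e ∈ M'.filter (fun e => ¬ P e), w e :=
    (Finset.sum_filter_add_sum_filter_not M' P w).symm
  -- cardinalities
  have hcM : (M.filter P).card + (M.filter (fun e => ¬ P e)).card = M.card :=
    Finset.card_filter_add_card_filter_not (p := P)
  have hcM' : (M'.filter P).card + (M'.filter (fun e => ¬ P e)).card = M'.card :=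
    Finset.card_filter_add_card_filter_not (p := P)
  have hcc : (M'.filter (fun e => ¬ P e)).card + 1 ≤ (M.filter (fun e => ¬ P e)).card := by
    omega
  have hccE : (M'.filter (fun e => ¬ P e)).card ≤ E.card :=
    Finset.card_le_card ((Finset.filter_subset _ _).trans hM'E)
  -- sum bounds on cross parts
  have hlow : ((M.filter (fun e => ¬ P e)).card : ℚ) ≤ ∑ e ∈ M.filter (fun e => ¬ P e), w e := by
    have := Finset.card_nsmul_le_sum (M.filter (fun e => ¬ P e)) w 1
      (fun e he => (hcrossM e he).1)
    simpa using this
  have hup : ∑ e ∈ M'.filter (fun e => ¬ P e), w e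
      ≤ ((M'.filter (fun e => ¬ P e)).card : ℚ) * (1 + 1/(E.card:ℚ)^2 + 1/(E.card:ℚ)^(n+3)) := by
    have := Finset.sum_le_card_nsmul (M'.filter (fun e => ¬ P e)) w
      (1 + 1/(E.card:ℚ)^2 + 1/(E.card:ℚ)^(n+3)) (fun e he => (hcrossM' e he).2)
    simpa only [nsmul_eq_mul] using this
  -- arithmetic facts
  have hq1 : (E.card:ℚ) * (1/(E.card:ℚ)^2) = 1/(E.card:ℚ) := by
    field_simp
  have hq2 : (E.card:ℚ) * (1/(E.card:ℚ)^(n+3)) = 1/(E.card:ℚ)^(n+2) := by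
    rw [show n + 3 = (n+2) + 1 from rfl, pow_succ]
    field_simp
  have hpos1 : (0:ℚ) ≤ 1/(E.card:ℚ)^2 := by positivity
  have hpos2 : (0:ℚ) ≤ 1/(E.card:ℚ)^(n+3) := by positivity
  constructor
  · have hc1 : ((M'.filter (fun e => ¬ P e)).card : ℚ) + 1
        ≤ ((M.filter (fun e => ¬ P e)).card : ℚ) := by exact_mod_cast hcc
    have hc2 : ((M'.filter (fun e => ¬ P e)).card : ℚ) ≤ (E.card:ℚ) := by exact_mod_cast hccE
    have key : ((M'.filter (fun e => ¬ P e)).card : ℚ) * (1/(E.card:ℚ)^2 + 1/(E.card:ℚ)^(n+3))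
        ≤ (E.card:ℚ) * (1/(E.card:ℚ)^2 + 1/(E.card:ℚ)^(n+3)) := by
      apply mul_le_mul_of_nonneg_right hc2
      linarith
    rw [hsplit, hsplit', hIM, hIM', hic]
    nlinarith [key, hq1, hq2]
  · have h8 : (8:ℚ) ≤ (E.card:ℚ)^(n+2) := by
      calc (8:ℚ) = 2^3 := by norm_num
        _ ≤ 2^(n+2) := by
          apply pow_le_pow_right₀ (by norm_num)
          omega
        _ ≤ (E.card:ℚ)^(n+2) := by
          apply pow_le_pow_left₀ (by norm_num) hm2
    have h1 : 1/(E.card:ℚ) ≤ 1/2 := by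
      apply one_div_le_one_div_of_le (by norm_num) hm2
    have h2 : 1/(E.card:ℚ)^(n+2) ≤ 1/8 := by
      apply one_div_le_one_div_of_le (by norm_num) h8
    linarith
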